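/- Let P ⊆ ℝ² be a trapezium of height h, with parallel sides (bases) of lengths b₁ and b₂ where b₁ ≤ b₂, and with non-parallel sides (legs) of lengths l₁ ≤ l₂. Then there exists a bilipschitz bijection T : [0,1]² → P with Lip(T) ≤ b₂ + l₂ and Lip(T⁻¹) ≤ √(b₂² + (3/2)·l₂²)/(b₁·h). -/

import Mathlib

noncomputable section

open scoped RealInnerProductSpace

/-- The closed unit square `[0,1]² ⊆ ℝ²`. -/
def unitSquare : Set (EuclideanSpace ℝ (Fin 2)) :=
  {x | x 0 ∈ Set.Icc (0 : ℝ) 1 ∧ x 1 ∈ Set.Icc (0 : ℝ) 1}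

lemma stmt9_norm_comb {E : Type*} [NormedAddCommGroup E] [InnerProductSpace ℝ E]
    (u v : E) (r a b : ℝ) (hperp : ⟪v - r • u, u⟫ = 0) :
    ‖a • u + b • v‖ ^ 2 = (a + b * r) ^ 2 * ‖u‖ ^ 2 + b ^ 2 * ‖v - r • u‖ ^ 2 := by
  have hd : a • u + b • v = (a + b * r) • u + b • (v - r • u) := by module
  rw [hd, norm_add_sq_real, real_inner_smul_left, real_inner_smul_right,
    real_inner_comm, hperp]
  simp [norm_smul, mul_pow, sq_abs]

lemma stmt9_key_forward (A B H b₂ l₂ ds dt : ℝ) (hA2 : A ^ 2 ≤ b₂ ^ 2)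
    (hB : B ^ 2 + H ^ 2 ≤ l₂ ^ 2) (hbl : 0 ≤ b₂ * l₂) :
    (A * ds + B * dt) ^ 2 + H ^ 2 * dt ^ 2 ≤ (b₂ + l₂) ^ 2 * (ds ^ 2 + dt ^ 2) := by
  nlinarith [sq_nonneg (A * dt - B * ds),
    mul_nonneg hbl (add_nonneg (sq_nonneg ds) (sq_nonneg dt)),
    mul_nonneg (sub_nonneg.mpr hA2) (sq_nonneg ds),
    mul_nonneg (sub_nonneg.mpr hA2) (sq_nonneg dt),
    mul_nonneg (sub_nonneg.mpr hB) (add_nonneg (sq_nonneg ds) (sq_nonneg dt)),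
    mul_nonneg (sq_nonneg H) (sq_nonneg ds)]

lemma stmt9_key_inverse (A B H b₁ l₂ ds dt : ℝ) (hA : b₁ ≤ A) (hb₁ : 0 ≤ b₁)
    (hB : B ^ 2 + H ^ 2 ≤ l₂ ^ 2) :
    b₁ ^ 2 * H ^ 2 * (ds ^ 2 + dt ^ 2) ≤
      (l₂ ^ 2 + b₁ ^ 2) * ((A * ds + B * dt) ^ 2 + H ^ 2 * dt ^ 2) := by
  have hA2 : b₁ ^ 2 ≤ A ^ 2 := by nlinarith
  have h1 : (H * A * ds) ^ 2 ≤
      l₂ ^ 2 * ((A * ds + B * dt) ^ 2 + (H * dt) ^ 2) := by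
    nlinarith [sq_nonneg (H * (H * dt) + B * (A * ds + B * dt)),
      mul_nonneg (sub_nonneg.mpr hB)
        (add_nonneg (sq_nonneg (A * ds + B * dt)) (sq_nonneg (H * dt)))]
  nlinarith [h1,
    mul_nonneg (mul_nonneg (sq_nonneg H) (sq_nonneg ds)) (sub_nonneg.mpr hA2),
    mul_nonneg (sq_nonneg b₁) (sq_nonneg (A * ds + B * dt))]

set_option maxHeartbeats 2000000 in
theorem stmt9 (v₁ v₂ v₃ v₄ : EuclideanSpace ℝ (Fin 2))
    (b₁ b₂ l₁ l₂ h c : ℝ) (hc : 0 < c)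
    (hpar : v₃ - v₄ = c • (v₂ - v₁))
    (hb₂ : dist v₁ v₂ = b₂) (hb₁ : dist v₄ v₃ = b₁)
    (hb : b₁ ≤ b₂) (hb₁pos : 0 < b₁)
    (hl₁ : dist v₂ v₃ = l₁) (hl₂ : dist v₁ v₄ = l₂) (hl : l₁ ≤ l₂)
    (hh : Metric.infDist v₄ ((affineSpan ℝ ({v₁, v₂} : Set (EuclideanSpace ℝ (Fin 2)))) :
      Set (EuclideanSpace ℝ (Fin 2))) = h)
    (hhpos : 0 < h) :
    ∃ T : EuclideanSpace ℝ (Fin 2) → EuclideanSpace ℝ (Fin 2),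
      Set.BijOn T unitSquare (convexHull ℝ {v₁, v₂, v₃, v₄}) ∧
      (∀ x ∈ unitSquare, ∀ y ∈ unitSquare,
        dist (T x) (T y) ≤ (b₂ + l₂) * dist x y) ∧
      (∀ x ∈ unitSquare, ∀ y ∈ unitSquare,
        dist x y ≤ (Real.sqrt (b₂ ^ 2 + (3 / 2) * l₂ ^ 2) / (b₁ * h)) * dist (T x) (T y)) := by
  classical
  set u := v₂ - v₁ with hu
  set w := v₄ - v₁ with hw
  have hb₂pos : 0 < b₂ := hb₁pos.trans_le hb
  have hub : ‖u‖ = b₂ := by rw [hu, ← hb₂, dist_eq_norm, norm_sub_rev]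
  have hwb : ‖w‖ = l₂ := by rw [hw, ← hl₂, dist_eq_norm, norm_sub_rev]
  have hcb : b₁ = c * b₂ := by
    rw [← hb₁, dist_comm, dist_eq_norm, hpar, norm_smul, Real.norm_eq_abs,
      abs_of_pos hc, hub]
  have hc1 : c ≤ 1 := by nlinarith
  have hl₂0 : 0 ≤ l₂ := by rw [← hl₂]; exact dist_nonneg
  have hl₁0 : 0 ≤ l₁ := by rw [← hl₁]; exact dist_nonneg
  set r : ℝ := ⟪w, u⟫ / b₂ ^ 2 with hr
  set H : ℝ := ‖w - r • u‖ with hH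
  have hperp : ⟪w - r • u, u⟫ = 0 := by
    rw [inner_sub_left, real_inner_smul_left, real_inner_self_eq_norm_sq, hub, hr]
    field_simp
    ring
  have hid : ∀ a b : ℝ, ‖a • u + b • w‖ ^ 2 = (a + b * r) ^ 2 * b₂ ^ 2 + b ^ 2 * H ^ 2 := by
    intro a b
    rw [stmt9_norm_comb u w r a b hperp, hub, hH]
  set q : ℝ := r * b₂ with hq
  have hq2 : q ^ 2 + H ^ 2 = l₂ ^ 2 := by
    have hid01 := hid 0 1
    have e : (0 : ℝ) • u + (1 : ℝ) • w = w := by module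
    rw [e, hwb] at hid01
    rw [hq]; linear_combination -hid01
  have hv₃ : v₃ = c • u + v₄ := by rw [hu]; exact sub_eq_iff_eq_add.mp hpar
  have hl₁n : ‖(c - 1) • u + w‖ = l₁ := by
    have e : (c - 1) • u + w = v₃ - v₂ := by rw [hv₃, hu, hw]; module
    rw [e, ← hl₁, dist_eq_norm, norm_sub_rev]
  have hq1 : (q + (c - 1) * b₂) ^ 2 + H ^ 2 = l₁ ^ 2 := by
    have hid1 := hid (c - 1) 1
    rw [one_smul, hl₁n] at hid1
    rw [hq]; linear_combination -hid1
  -- height comparison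
  have hHh : h ≤ H := by
    have hmem : v₁ + r • u ∈ affineSpan ℝ ({v₁, v₂} : Set (EuclideanSpace ℝ (Fin 2))) := by
      have h' := AffineMap.lineMap_mem_affineSpan_pair (k := ℝ) r v₁ v₂
      have e' : AffineMap.lineMap v₁ v₂ r = v₁ + r • u := by
        simp only [AffineMap.lineMap_apply, vsub_eq_sub, vadd_eq_add, hu]
        abel
      rwa [e'] at h'
    have hle : Metric.infDist v₄
        ((affineSpan ℝ ({v₁, v₂} : Set (EuclideanSpace ℝ (Fin 2)))) :
          Set (EuclideanSpace ℝ (Fin 2))) ≤ dist v₄ (v₁ + r • u) :=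
      Metric.infDist_le_dist_of_mem (SetLike.mem_coe.mpr hmem)
    rw [hh] at hle
    have e : dist v₄ (v₁ + r • u) = H := by
      rw [hH, hw, dist_eq_norm]
      congr 1
      abel
    rwa [e] at hle
  have hHpos : 0 < H := hhpos.trans_le hHh
  -- bounds for A and B
  have hA1 : ∀ t' ∈ Set.Icc (0 : ℝ) 1, b₁ ≤ (1 + t' * (c - 1)) * b₂ := by
    intro t' ht'
    nlinarith [ht'.1, ht'.2]
  have hA2 : ∀ t' ∈ Set.Icc (0 : ℝ) 1, ((1 + t' * (c - 1)) * b₂) ^ 2 ≤ b₂ ^ 2 := by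
    intro t' ht'
    have h1 := hA1 t' ht'
    have h2 : (1 + t' * (c - 1)) * b₂ ≤ b₂ := by nlinarith [ht'.1, ht'.2]
    nlinarith
  have hBb : ∀ s ∈ Set.Icc (0 : ℝ) 1, (q + s * (c - 1) * b₂) ^ 2 + H ^ 2 ≤ l₂ ^ 2 := by
    intro s hs
    have hll : l₁ ^ 2 ≤ l₂ ^ 2 := by nlinarith
    have hqq : (q + (c - 1) * b₂) ^ 2 ≤ q ^ 2 := by nlinarith [hq1, hq2, hll]
    nlinarith [hqq, mul_nonneg hs.1 (sub_nonneg.mpr hqq),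
      mul_nonneg (mul_nonneg hs.1 (sub_nonneg.mpr hs.2)) (sq_nonneg ((1 - c) * b₂)), hq2]
  -- the map
  set T : EuclideanSpace ℝ (Fin 2) → EuclideanSpace ℝ (Fin 2) :=
    fun x => v₁ + (x 0 * (1 + x 1 * (c - 1))) • u + x 1 • w with hT
  have hdiff : ∀ x y : EuclideanSpace ℝ (Fin 2), T x - T y =
      (x 0 * (1 + x 1 * (c - 1)) - y 0 * (1 + y 1 * (c - 1))) • u + (x 1 - y 1) • w := by
    intro x y
    simp only [hT]
    module
  have hTsq : ∀ x y : EuclideanSpace ℝ (Fin 2), dist (T x) (T y) ^ 2 =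
      ((1 + y 1 * (c - 1)) * b₂ * (x 0 - y 0) + (q + x 0 * (c - 1) * b₂) * (x 1 - y 1)) ^ 2
        + H ^ 2 * (x 1 - y 1) ^ 2 := by
    intro x y
    rw [dist_eq_norm, hdiff x y, hid, hq]
    ring
  have hxy : ∀ x y : EuclideanSpace ℝ (Fin 2),
      dist x y ^ 2 = (x 0 - y 0) ^ 2 + (x 1 - y 1) ^ 2 := by
    intro x y
    rw [EuclideanSpace.dist_eq, Real.sq_sqrt (by positivity), Fin.sum_univ_two,
      Real.dist_eq, Real.dist_eq, sq_abs, sq_abs]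
  -- forward Lipschitz bound
  have hfwd : ∀ x ∈ unitSquare, ∀ y ∈ unitSquare,
      dist (T x) (T y) ≤ (b₂ + l₂) * dist x y := by
    intro x hx y hy
    obtain ⟨hx0, hx1⟩ := hx
    obtain ⟨hy0, hy1⟩ := hy
    have hsq : dist (T x) (T y) ^ 2 ≤ ((b₂ + l₂) * dist x y) ^ 2 := by
      rw [hTsq x y, mul_pow, hxy x y]
      exact stmt9_key_forward _ _ _ _ _ _ _ (hA2 _ hy1) (hBb _ hx0)
        (mul_nonneg hb₂pos.le hl₂0)
    calc dist (T x) (T y) = Real.sqrt (dist (T x) (T y) ^ 2) :=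
          (Real.sqrt_sq dist_nonneg).symm
      _ ≤ Real.sqrt (((b₂ + l₂) * dist x y) ^ 2) := Real.sqrt_le_sqrt hsq
      _ = (b₂ + l₂) * dist x y :=
          Real.sqrt_sq (mul_nonneg (by linarith) dist_nonneg)
  -- inverse Lipschitz bound
  have hinv : ∀ x ∈ unitSquare, ∀ y ∈ unitSquare,
      dist x y ≤ (Real.sqrt (b₂ ^ 2 + (3 / 2) * l₂ ^ 2) / (b₁ * h)) * dist (T x) (T y) := by
    intro x hx y hy
    obtain ⟨hx0, hx1⟩ := hx
    obtain ⟨hy0, hy1⟩ := hy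
    have h1 : b₁ ^ 2 * H ^ 2 * ((x 0 - y 0) ^ 2 + (x 1 - y 1) ^ 2) ≤
        (l₂ ^ 2 + b₁ ^ 2) * dist (T x) (T y) ^ 2 := by
      rw [hTsq x y]
      exact stmt9_key_inverse _ _ _ _ _ _ _ (hA1 _ hy1) hb₁pos.le (hBb _ hx0)
    have h2 : b₁ ^ 2 * h ^ 2 * dist x y ^ 2 ≤
        (b₂ ^ 2 + (3 / 2) * l₂ ^ 2) * dist (T x) (T y) ^ 2 := by
      rw [hxy x y]
      have e1 : b₁ ^ 2 * h ^ 2 ≤ b₁ ^ 2 * H ^ 2 := by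
        linarith only [mul_le_mul_of_nonneg_left (mul_self_le_mul_self hhpos.le hHh)
          (sq_nonneg b₁)]
      have e2 : l₂ ^ 2 + b₁ ^ 2 ≤ b₂ ^ 2 + (3 / 2) * l₂ ^ 2 := by
        linarith only [mul_self_le_mul_self hb₁pos.le hb, sq_nonneg l₂]
      have dd : (0 : ℝ) ≤ (x 0 - y 0) ^ 2 + (x 1 - y 1) ^ 2 := by positivity
      have e3 := mul_le_mul_of_nonneg_right e1 dd
      have e4 := mul_le_mul_of_nonneg_right e2 (sq_nonneg (dist (T x) (T y)))
      linarith only [h1, e3, e4]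
    have hbh : (0 : ℝ) < (b₁ * h) ^ 2 := pow_pos (mul_pos hb₁pos hhpos) 2
    have hK2 : (Real.sqrt (b₂ ^ 2 + (3 / 2) * l₂ ^ 2) / (b₁ * h)) ^ 2 =
        (b₂ ^ 2 + (3 / 2) * l₂ ^ 2) / (b₁ * h) ^ 2 := by
      rw [div_pow, Real.sq_sqrt (by positivity)]
    have h3 : dist x y ^ 2 ≤
        ((Real.sqrt (b₂ ^ 2 + (3 / 2) * l₂ ^ 2) / (b₁ * h)) * dist (T x) (T y)) ^ 2 := by
      rw [mul_pow, hK2, div_mul_eq_mul_div, le_div_iff₀ hbh]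
      nlinarith [h2]
    have hK0 : (0 : ℝ) ≤ (Real.sqrt (b₂ ^ 2 + (3 / 2) * l₂ ^ 2) / (b₁ * h)) * dist (T x) (T y) :=
      mul_nonneg (div_nonneg (Real.sqrt_nonneg _) (mul_pos hb₁pos hhpos).le) dist_nonneg
    calc dist x y = Real.sqrt (dist x y ^ 2) := (Real.sqrt_sq dist_nonneg).symm
      _ ≤ Real.sqrt (((Real.sqrt (b₂ ^ 2 + (3 / 2) * l₂ ^ 2) / (b₁ * h)) * dist (T x) (T y)) ^ 2) :=
          Real.sqrt_le_sqrt h3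
      _ = _ := Real.sqrt_sq hK0
  -- bijectivity
  have hmaps : Set.MapsTo T unitSquare (convexHull ℝ {v₁, v₂, v₃, v₄}) := by
    intro x hx
    obtain ⟨hx0, hx1⟩ := hx
    have hv1 : v₁ ∈ convexHull ℝ ({v₁, v₂, v₃, v₄} : Set (EuclideanSpace ℝ (Fin 2))) :=
      subset_convexHull ℝ _ (by simp)
    have hv2 : v₂ ∈ convexHull ℝ ({v₁, v₂, v₃, v₄} : Set (EuclideanSpace ℝ (Fin 2))) :=
      subset_convexHull ℝ _ (by simp)
    have hv3 : v₃ ∈ convexHull ℝ ({v₁, v₂, v₃, v₄} : Set (EuclideanSpace ℝ (Fin 2))) :=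
      subset_convexHull ℝ _ (by simp)
    have hv4 : v₄ ∈ convexHull ℝ ({v₁, v₂, v₃, v₄} : Set (EuclideanSpace ℝ (Fin 2))) :=
      subset_convexHull ℝ _ (by simp)
    have hP1 : (1 - x 0) • v₁ + x 0 • v₂ ∈
        convexHull ℝ ({v₁, v₂, v₃, v₄} : Set (EuclideanSpace ℝ (Fin 2))) :=
      (convex_convexHull ℝ _) hv1 hv2 (by linarith [hx0.2]) hx0.1 (by ring)
    have hP2 : (1 - x 0) • v₄ + x 0 • v₃ ∈
        convexHull ℝ ({v₁, v₂, v₃, v₄} : Set (EuclideanSpace ℝ (Fin 2))) :=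
      (convex_convexHull ℝ _) hv4 hv3 (by linarith [hx0.2]) hx0.1 (by ring)
    have hP : (1 - x 1) • ((1 - x 0) • v₁ + x 0 • v₂) + x 1 • ((1 - x 0) • v₄ + x 0 • v₃) ∈
        convexHull ℝ ({v₁, v₂, v₃, v₄} : Set (EuclideanSpace ℝ (Fin 2))) :=
      (convex_convexHull ℝ _) hP1 hP2 (by linarith [hx1.2]) hx1.1 (by ring)
    have e : T x = (1 - x 1) • ((1 - x 0) • v₁ + x 0 • v₂) +
        x 1 • ((1 - x 0) • v₄ + x 0 • v₃) := by
      simp only [hT]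
      rw [hv₃, hu, hw]
      module
    rw [e]
    exact hP
  have hinj : Set.InjOn T unitSquare := by
    intro x hx y hy hxyT
    have hle := hinv x hx y hy
    rw [hxyT, dist_self, mul_zero] at hle
    exact dist_le_zero.mp hle
  have hsq01 : ∀ s t : ℝ, s ∈ Set.Icc (0:ℝ) 1 → t ∈ Set.Icc (0:ℝ) 1 →
      (!₂[s, t] : EuclideanSpace ℝ (Fin 2)) ∈ unitSquare := by
    intro s t hs ht
    constructor <;> simp [hs, ht]
  have hsurj : Set.SurjOn T unitSquare (convexHull ℝ {v₁, v₂, v₃, v₄}) := by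
    have himg : Convex ℝ (T '' unitSquare) := by
      rintro _ ⟨x, hx, rfl⟩ _ ⟨y, hy, rfl⟩ a b ha hb' hab
      obtain ⟨hx0, hx1⟩ := hx
      obtain ⟨hy0, hy1⟩ := hy
      have hαx : c ≤ 1 + x 1 * (c - 1) := by
        linarith only [mul_nonneg (sub_nonneg.mpr hx1.2) (sub_nonneg.mpr hc1)]
      have hαy : c ≤ 1 + y 1 * (c - 1) := by
        linarith only [mul_nonneg (sub_nonneg.mpr hy1.2) (sub_nonneg.mpr hc1)]
      have ht'' : a * x 1 + b * y 1 ∈ Set.Icc (0:ℝ) 1 := by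
        constructor
        · have e1 := mul_nonneg ha hx1.1
          have e2 := mul_nonneg hb' hy1.1
          linarith only [e1, e2]
        · linarith only [mul_nonneg ha (sub_nonneg.mpr hx1.2),
            mul_nonneg hb' (sub_nonneg.mpr hy1.2), hab]
      have hαt : c ≤ 1 + (a * x 1 + b * y 1) * (c - 1) := by
        linarith only [mul_nonneg (sub_nonneg.mpr ht''.2) (sub_nonneg.mpr hc1)]
      have hαtpos : (0:ℝ) < 1 + (a * x 1 + b * y 1) * (c - 1) := lt_of_lt_of_le hc hαt
      set N : ℝ := a * (x 0 * (1 + x 1 * (c - 1))) + b * (y 0 * (1 + y 1 * (c - 1))) with hN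
      have hN0 : 0 ≤ N := by
        rw [hN]
        have h1 : 0 ≤ x 0 * (1 + x 1 * (c - 1)) :=
          mul_nonneg hx0.1 (by linarith only [hαx, hc])
        have h2 : 0 ≤ y 0 * (1 + y 1 * (c - 1)) :=
          mul_nonneg hy0.1 (by linarith only [hαy, hc])
        exact add_nonneg (mul_nonneg ha h1) (mul_nonneg hb' h2)
      have hN1 : N ≤ 1 + (a * x 1 + b * y 1) * (c - 1) := by
        rw [hN]
        have hαx0 : (0:ℝ) ≤ 1 + x 1 * (c - 1) := by linarith only [hαx, hc]
        have hαy0 : (0:ℝ) ≤ 1 + y 1 * (c - 1) := by linarith only [hαy, hc]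
        have h1 : x 0 * (1 + x 1 * (c - 1)) ≤ 1 + x 1 * (c - 1) := by
          linarith only [mul_nonneg (sub_nonneg.mpr hx0.2) hαx0]
        have h2 : y 0 * (1 + y 1 * (c - 1)) ≤ 1 + y 1 * (c - 1) := by
          linarith only [mul_nonneg (sub_nonneg.mpr hy0.2) hαy0]
        linarith only [mul_le_mul_of_nonneg_left h1 ha,
          mul_le_mul_of_nonneg_left h2 hb', hab]
      set s'' : ℝ := N / (1 + (a * x 1 + b * y 1) * (c - 1)) with hs''
      have hs''mem : s'' ∈ Set.Icc (0:ℝ) 1 := by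
        constructor
        · exact div_nonneg hN0 hαtpos.le
        · rw [hs'', div_le_one hαtpos]; exact hN1
      refine ⟨!₂[s'', a * x 1 + b * y 1], hsq01 _ _ hs''mem ht'', ?_⟩
      have hcancel : s'' * (1 + (a * x 1 + b * y 1) * (c - 1)) = N :=
        div_mul_cancel₀ _ hαtpos.ne'
      simp only [hT, PiLp.toLp_apply, Matrix.cons_val_zero, Matrix.cons_val_one, Matrix.head_cons]
      rw [hcancel, hN]
      match_scalars
      · linear_combination -hab
      · ring
      · ring
    apply convexHull_min ?_ himg
    intro z hz
    simp only [Set.mem_insert_iff, Set.mem_singleton_iff] at hz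
    rcases hz with rfl | rfl | rfl | rfl
    · refine ⟨!₂[0, 0], hsq01 0 0 (by norm_num) (by norm_num), ?_⟩
      simp only [hT, PiLp.toLp_apply, Matrix.cons_val_zero, Matrix.cons_val_one, Matrix.head_cons]
      rw [hu, hw]; module
    · refine ⟨!₂[1, 0], hsq01 1 0 (by norm_num) (by norm_num), ?_⟩
      simp only [hT, PiLp.toLp_apply, Matrix.cons_val_zero, Matrix.cons_val_one, Matrix.head_cons]
      rw [hu, hw]; module
    · refine ⟨!₂[1, 1], hsq01 1 1 (by norm_num) (by norm_num), ?_⟩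
      simp only [hT, PiLp.toLp_apply, Matrix.cons_val_zero, Matrix.cons_val_one, Matrix.head_cons]
      rw [hv₃, hu, hw]; module
    · refine ⟨!₂[0, 1], hsq01 0 1 (by norm_num) (by norm_num), ?_⟩
      simp only [hT, PiLp.toLp_apply, Matrix.cons_val_zero, Matrix.cons_val_one, Matrix.head_cons]
      rw [hu, hw]; module
  exact ⟨T, ⟨hmaps, hinj, hsurj⟩, hfwd, hinv⟩

end
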